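/- For every ordinal α and S ⊆ ℕ^ℕ: S is guessable with fewer than α mind changes if and only if S_α = ∅. -/

import Mathlib

open Filter Topology Classical

/-- The initial segment `f↾n` of an infinite sequence. -/
def res (f : ℕ → ℕ) (n : ℕ) : List ℕ := List.ofFn (fun i : Fin n => f i)

/-- `[X]`: the set of infinite sequences all of whose finite initial segments lie in `X`. -/
def seqsIn (X : Set (List ℕ)) : Set (ℕ → ℕ) := {f | ∀ n, res f n ∈ X}

/-- The simplified remainder `S_α`. -/
noncomputable def SRem (S : Set (ℕ → ℕ)) (α : Ordinal.{0}) : Set (List ℕ) :=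
  Ordinal.limitRecOn α Set.univ
    (fun _ prev => {x | x ∈ prev ∧ ∃ f g : ℕ → ℕ,
      f ∈ seqsIn prev ∧ g ∈ seqsIn prev ∧ res f x.length = x ∧ res g x.length = x ∧
      f ∈ S ∧ g ∉ S})
    (fun _ _ ih => ⋂ (β : Ordinal.{0}) (h : β < _), ih β h)

/-- Wadge's remainder `Rm_μ(A,B)`. -/
noncomputable def Rm (A B : Set (ℕ → ℕ)) (μ : Ordinal.{0}) : Set (ℕ → ℕ) :=
  if μ = 0 then Set.univ
  else ⋂ (ν : {ν : Ordinal.{0} // ν < μ}),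
    closure (Rm A B ν.1 ∩ A) ∩ closure (Rm A B ν.1 ∩ B)
termination_by μ
decreasing_by exact ν.2

/-- The least ordinal at which the simplified remainders stabilize. -/
noncomputable def alphaS (S : Set (ℕ → ℕ)) : Ordinal.{0} :=
  sInf {α | SRem S α = SRem S (α + 1)}

/-- `S_∞`, the stable value of the simplified remainders. -/
noncomputable def Sinf (S : Set (ℕ → ℕ)) : Set (List ℕ) := SRem S (alphaS S)

/-- `β(σ)`: the least ordinal `γ` with `σ ∉ S_γ`. -/
noncomputable def betaOf (S : Set (ℕ → ℕ)) (σ : List ℕ) : Ordinal.{0} :=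
  sInf {γ | σ ∉ SRem S γ}

/-- `G` guesses `S`. -/
def Guesses (G : List ℕ → Bool) (S : Set (ℕ → ℕ)) : Prop :=
  ∀ f : ℕ → ℕ, ∀ᶠ n in atTop, (G (res f n) = true ↔ f ∈ S)

def Guessable (S : Set (ℕ → ℕ)) : Prop := ∃ G, Guesses G S

/-- `G, H` witness that `S` is guessable with `< α` mind changes. -/
def WitnessMC (S : Set (ℕ → ℕ)) (α : Ordinal.{0}) (G : List ℕ → Bool)
    (H : List ℕ → Ordinal.{0}) : Prop :=
  Guesses G S ∧ (∀ σ, H σ < α) ∧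
  (∀ (f : ℕ → ℕ) (n : ℕ), H (res f (n + 1)) ≤ H (res f n)) ∧
  (∀ (f : ℕ → ℕ) (n : ℕ), G (res f (n + 1)) ≠ G (res f n) →
    H (res f (n + 1)) < H (res f n))

def GuessableMC (S : Set (ℕ → ℕ)) (α : Ordinal.{0}) : Prop := ∃ G H, WitnessMC S α G H

/-- An ordinal is even if it is of the form `λ + n` with `λ` limit or zero and `n` even. -/
def OrdEven (o : Ordinal.{0}) : Prop :=
  ∃ (l : Ordinal.{0}) (n : ℕ), (l = 0 ∨ Order.IsSuccLimit l) ∧ o = l + n ∧ Even n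

/-- The Hausdorff difference set `D_α((A_η)_{η<α})`. -/
def DSet (α : Ordinal.{0}) (A : Ordinal.{0} → Set (ℕ → ℕ)) : Set (ℕ → ℕ) :=
  {x | ∃ η, η < α ∧ x ∈ A η ∧ (∀ η', η' < η → x ∉ A η') ∧ (OrdEven η ↔ ¬ OrdEven α)}

/-- Membership in the class `D_α(Σ⁰₁)`. -/
def InDiff (α : Ordinal.{0}) (S : Set (ℕ → ℕ)) : Prop :=
  ∃ A : Ordinal.{0} → Set (ℕ → ℕ), (∀ η, η < α → IsOpen (A η)) ∧
    (∀ η η', η ≤ η' → η' < α → A η ⊆ A η') ∧ S = DSet α A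
/-- Wadge's `Rm_Ω(S)`: the stable value of `Rm_μ(S, Sᶜ)`. -/
noncomputable def RmInf (S : Set (ℕ → ℕ)) : Set (ℕ → ℕ) :=
  Rm S Sᶜ (sInf {μ : Ordinal.{0} | Rm S Sᶜ μ = Rm S Sᶜ (μ + 1)})

/-- The canonical guesser `G_S`. -/
noncomputable def GS (S : Set (ℕ → ℕ)) (σ : List ℕ) : Bool :=
  if (∃ f : ℕ → ℕ, res f σ.length = σ ∧ f ∈ seqsIn (SRem S (betaOf S σ - 1))) then
    decide (∃ f : ℕ → ℕ, res f σ.length = σ ∧ f ∈ seqsIn (SRem S (betaOf S σ - 1)) ∧ f ∈ S)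
  else if h : σ = [] then false
  else GS S σ.dropLast
termination_by σ.length
decreasing_by
  simp only [List.length_dropLast]
  exact Nat.sub_lt (List.length_pos_iff.mpr h) one_pos

/-- `S` is `F_σ`: a countable union of closed sets. -/
def IsFsigma (S : Set (ℕ → ℕ)) : Prop :=
  ∃ C : ℕ → Set (ℕ → ℕ), (∀ n, IsClosed (C n)) ∧ S = ⋃ n, C n

/-- Boolean combinations of open sets. -/
inductive BoolComb : Set (ℕ → ℕ) → Prop
  | isOpen {s : Set (ℕ → ℕ)} : IsOpen s → BoolComb s
  | compl {s : Set (ℕ → ℕ)} : BoolComb s → BoolComb sᶜ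
  | union {s t : Set (ℕ → ℕ)} : BoolComb s → BoolComb t → BoolComb (s ∪ t)

/-- The Borel class `Σ⁰_α` on Baire space (for `α ≥ 1`). -/
noncomputable def Sigma0 (α : Ordinal.{0}) : Set (Set (ℕ → ℕ)) :=
  if α = 1 then {s | IsOpen s}
  else {s | ∃ g : ℕ → Set (ℕ → ℕ), s = ⋃ n, g n ∧
    ∀ n, ∃ β : {β : Ordinal.{0} // β < α}, 1 ≤ β.1 ∧ (g n)ᶜ ∈ Sigma0 β.1}
termination_by α
decreasing_by exact β.2

/-- The ambiguous Borel class `Δ⁰_α`. -/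
noncomputable def Delta0 (α : Ordinal.{0}) : Set (Set (ℕ → ℕ)) :=
  {s | s ∈ Sigma0 α ∧ sᶜ ∈ Sigma0 α}

/-- The Boolean characteristic function. -/
noncomputable def chi (X : Set (ℕ → ℕ)) (f : ℕ → ℕ) : Bool := decide (f ∈ X)

/-- `G` guesses `S` based on the sequence of sets `Ss`. -/
def GuessesBased (G : List Bool → Bool) (Ss : ℕ → Set (ℕ → ℕ)) (S : Set (ℕ → ℕ)) : Prop :=
  ∀ f : ℕ → ℕ, ∀ᶠ n in atTop,
    (G (List.ofFn (fun i : Fin n => chi (Ss i) f)) = true ↔ f ∈ S)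

/-- `S` is `μ`th-order guessable. -/
def HigherGuessable (μ : Ordinal.{0}) (S : Set (ℕ → ℕ)) : Prop :=
  ∃ Ss : ℕ → Set (ℕ → ℕ), (∀ i, ∃ μi, μi < μ ∧ Ss i ∈ Delta0 (μi + 1)) ∧
    ∃ G : List Bool → Bool, GuessesBased G Ss S

lemma res_length (f : ℕ → ℕ) (n : ℕ) : (res f n).length = n := by simp [res]

lemma res_take (f : ℕ → ℕ) {n m : ℕ} (h : n ≤ m) : (res f m).take n = res f n := by
  apply List.ext_getElem
  · simp [res, h]
  · intro i h1 h2
    simp [res]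

lemma res_succ_dropLast (f : ℕ → ℕ) (n : ℕ) : (res f (n+1)).dropLast = res f n := by
  rw [List.dropLast_eq_take]
  simpa [res_length] using res_take f (Nat.le_succ n)

lemma SRem_zero (S : Set (ℕ → ℕ)) : SRem S 0 = Set.univ := by
  simp [SRem]

lemma SRem_succ (S : Set (ℕ → ℕ)) (β : Ordinal.{0}) :
    SRem S (β + 1) = {x | x ∈ SRem S β ∧ ∃ f g : ℕ → ℕ,
      f ∈ seqsIn (SRem S β) ∧ g ∈ seqsIn (SRem S β) ∧ res f x.length = x ∧ res g x.length = x ∧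
      f ∈ S ∧ g ∉ S} := by
  rw [SRem, Ordinal.add_one_eq_succ, Ordinal.limitRecOn_succ]
  rfl

lemma SRem_limit (S : Set (ℕ → ℕ)) {β : Ordinal.{0}} (h : Order.IsSuccLimit β) :
    SRem S β = ⋂ (γ : Ordinal.{0}) (_ : γ < β), SRem S γ := by
  rw [SRem, Ordinal.limitRecOn_limit _ _ _ _ h]
  rfl


lemma SRem_anti (S : Set (ℕ → ℕ)) : ∀ γ : Ordinal.{0}, ∀ β ≤ γ, SRem S γ ⊆ SRem S β := by
  intro γ
  induction γ using Ordinal.induction with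
  | h γ ih =>
    intro β hβ
    rcases eq_or_lt_of_le hβ with rfl | hlt
    · exact subset_rfl
    rcases Ordinal.zero_or_succ_or_isSuccLimit γ with h0 | ⟨δ, rfl⟩ | hl
    · exact absurd (h0 ▸ hlt) (not_lt_zero (a := β))
    · rw [← Ordinal.add_one_eq_succ, SRem_succ]
      intro x hx
      have hδ : x ∈ SRem S δ := hx.1
      exact ih δ (by rw [← Ordinal.add_one_eq_succ]; exact lt_add_one δ) β
        (by rw [← Ordinal.add_one_eq_succ] at hlt; exact Order.lt_succ_iff.mp (by rwa [Ordinal.add_one_eq_succ] at hlt)) hδ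
    · rw [SRem_limit S hl]
      intro x hx
      simp only [Set.mem_iInter] at hx
      exact hx β hlt

lemma SRem_prefix (S : Set (ℕ → ℕ)) : ∀ γ : Ordinal.{0}, ∀ (f : ℕ → ℕ) (n m : ℕ), n ≤ m →
    res f m ∈ SRem S γ → res f n ∈ SRem S γ := by
  intro γ
  induction γ using Ordinal.induction with
  | h γ ih =>
    intro f n m hnm hx
    rcases Ordinal.zero_or_succ_or_isSuccLimit γ with h0 | ⟨δ, rfl⟩ | hl
    · rw [h0, SRem_zero]; trivial
    · rw [← Ordinal.add_one_eq_succ, SRem_succ] at hx ⊢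
      obtain ⟨hβ, g, h, hg, hh, hgr, hhr, hgS, hhS⟩ := hx
      have hδlt : δ < Order.succ δ := Order.lt_succ δ
      refine ⟨ih δ hδlt f n m hnm hβ, g, h, hg, hh, ?_, ?_, hgS, hhS⟩
      · rw [res_length] at hgr ⊢
        calc res g n = (res g m).take n := (res_take g hnm).symm
        _ = (res f m).take n := by rw [hgr]
        _ = res f n := res_take f hnm
      · rw [res_length] at hhr ⊢
        calc res h n = (res h m).take n := (res_take h hnm).symm
        _ = (res f m).take n := by rw [hhr]
        _ = res f n := res_take f hnm
    · rw [SRem_limit S hl] at hx ⊢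
      simp only [Set.mem_iInter] at hx ⊢
      intro γ' hγ'
      exact ih γ' hγ' f n m hnm (hx γ' hγ')


section Fwd
variable {S : Set (ℕ → ℕ)} {α : Ordinal.{0}} {G : List ℕ → Bool} {H : List ℕ → Ordinal.{0}}

lemma H_mono (hw : ∀ (f : ℕ → ℕ) (n : ℕ), H (res f (n + 1)) ≤ H (res f n))
    (f : ℕ → ℕ) {L n : ℕ} (h : L ≤ n) : H (res f n) ≤ H (res f L) := by
  induction n with
  | zero => exact le_of_eq (by rw [Nat.le_zero.mp h])
  | succ n ih =>
    rcases Nat.lt_or_ge L (n+1) with hlt | hge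
    · exact le_trans (hw f n) (ih (by omega))
    · have : L = n + 1 := by omega
      rw [this]
  

lemma exists_change (f : ℕ → ℕ) {L N : ℕ} {b : Bool}
    (hG : ∀ n ≥ N, G (res f n) = b) (hL : G (res f L) ≠ b) :
    ∃ k ≥ L, G (res f (k+1)) ≠ G (res f k) := by
  by_contra hc
  push_neg at hc
  have key : ∀ m, G (res f (L + m)) = G (res f L) := by
    intro m
    induction m with
    | zero => rfl
    | succ m ih => rw [← Nat.add_assoc, hc (L + m) (Nat.le_add_right L m), ih]
  have := key N
  rw [hG (L + N) (Nat.le_add_left N L)] at this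
  exact hL this.symm

lemma main_fwd (hw : WitnessMC S α G H) :
    ∀ β : Ordinal.{0}, ∀ σ ∈ SRem S β, β ≤ H σ := by
  obtain ⟨hG, hHlt, hmono, hchange⟩ := hw
  intro β
  induction β using Ordinal.induction with
  | h β ih =>
    intro σ hσ
    rcases Ordinal.zero_or_succ_or_isSuccLimit β with h0 | ⟨δ, rfl⟩ | hl
    · simp [h0]
    · rw [← Ordinal.add_one_eq_succ] at *
      rw [SRem_succ] at hσ
      obtain ⟨hβ, f, g, hf, hg, hfr, hgr, hfS, hgS⟩ := hσ
      -- choose h among f,g with eventual G-value ≠ G σ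
      set L := σ.length with hLdef
      obtain ⟨Nf, hNf⟩ := (Filter.eventually_atTop.mp (hG f))
      obtain ⟨Ng, hNg⟩ := (Filter.eventually_atTop.mp (hG g))
      have step : ∀ h : ℕ → ℕ, h ∈ seqsIn (SRem S δ) → res h L = σ →
          (∃ k ≥ L, G (res h (k+1)) ≠ G (res h k)) → δ + 1 ≤ H σ := by
        intro h hseq hres ⟨k, hk, hne⟩
        have h1 : H (res h (k+1)) < H (res h k) := hchange h k hne
        have h2 : H (res h k) ≤ H (res h L) := H_mono hmono h hk
        have h3 : δ ≤ H (res h (k+1)) := ih δ (lt_add_one δ) _ (hseq (k+1))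
        rw [hres] at h2
        have : δ < H σ := lt_of_le_of_lt h3 (lt_of_lt_of_le h1 h2)
        rwa [Ordinal.add_one_eq_succ, Order.succ_le_iff]
      by_cases hb : G σ = true
      · -- use g : eventually false
        refine step g hg hgr (exists_change g (N := Ng) (b := false) ?_ ?_)
        · intro n hn
          have := hNg n hn
          simpa [hgS] using this
        · rw [hgr, hb]; simp
      · refine step f hf hfr (exists_change f (N := Nf) (b := true) ?_ ?_)
        · intro n hn
          exact (hNf n hn).mpr hfS
        · rw [hfr]; simpa using hb
    · rw [SRem_limit S hl] at hσ
      simp only [Set.mem_iInter] at hσ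
      refine le_of_forall_lt fun γ hγ => ?_
      have h1 : γ + 1 < β := hl.succ_lt hγ  -- succ_lt_of_lt? check
      have := ih (γ+1) (by rwa [Ordinal.add_one_eq_succ]; ) σ (by
        rw [Ordinal.add_one_eq_succ] at h1 ⊢
        exact hσ _ h1)
      exact lt_of_lt_of_le (by rw [Ordinal.add_one_eq_succ]; exact Order.lt_succ γ) this
end Fwd

/-- Our guesser, using `Ordinal.pred`. -/
noncomputable def GB (S : Set (ℕ → ℕ)) (σ : List ℕ) : Bool :=
  if (∃ f : ℕ → ℕ, res f σ.length = σ ∧ f ∈ seqsIn (SRem S (Ordinal.pred (betaOf S σ)))) then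
    decide (∃ f : ℕ → ℕ, res f σ.length = σ ∧
      f ∈ seqsIn (SRem S (Ordinal.pred (betaOf S σ))) ∧ f ∈ S)
  else if h : σ = [] then false
  else GB S σ.dropLast
termination_by σ.length
decreasing_by
  simp only [List.length_dropLast]
  exact Nat.sub_lt (List.length_pos_iff.mpr h) one_pos

noncomputable def HB (S : Set (ℕ → ℕ)) (σ : List ℕ) : Ordinal.{0} :=
  Ordinal.pred (betaOf S σ)

section Bwd
variable {S : Set (ℕ → ℕ)} {α : Ordinal.{0}}

lemma beta_not_mem (hS : SRem S α = ∅) (σ : List ℕ) : σ ∉ SRem S (betaOf S σ) := by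
  have hne : {γ : Ordinal.{0} | σ ∉ SRem S γ}.Nonempty := ⟨α, by simp [hS]⟩
  exact csInf_mem hne

lemma beta_le (hS : SRem S α = ∅) (σ : List ℕ) : betaOf S σ ≤ α :=
  csInf_le' (by simp [hS])

lemma mem_of_lt_beta {σ : List ℕ} {γ : Ordinal.{0}} (h : γ < betaOf S σ) : σ ∈ SRem S γ := by
  by_contra hc
  have h2 : betaOf S σ ≤ γ := csInf_le' hc
  exact absurd h (not_lt.mpr h2)

lemma beta_succ (hS : SRem S α = ∅) (σ : List ℕ) :
    betaOf S σ = HB S σ + 1 := by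
  rcases Ordinal.zero_or_succ_or_isSuccLimit (betaOf S σ) with h0 | hs | hl
  · exfalso
    have := beta_not_mem hS σ
    rw [h0, SRem_zero] at this
    exact this trivial
  · rw [Ordinal.add_one_eq_succ, HB]
    obtain ⟨δ, hδ⟩ := hs
    rw [← hδ, Ordinal.pred_succ]
  · exfalso
    have hnm := beta_not_mem hS σ
    rw [SRem_limit S hl] at hnm
    simp only [Set.mem_iInter, not_forall] at hnm
    obtain ⟨γ, hγ, hγn⟩ := hnm
    exact hγn (mem_of_lt_beta hγ)

lemma HB_lt_beta (hS : SRem S α = ∅) (σ : List ℕ) : HB S σ < betaOf S σ := by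
  conv_rhs => rw [beta_succ hS σ]
  exact lt_add_one _

lemma mem_HB (hS : SRem S α = ∅) (σ : List ℕ) : σ ∈ SRem S (HB S σ) :=
  mem_of_lt_beta (HB_lt_beta hS σ)

lemma not_mem_HB_succ (hS : SRem S α = ∅) (σ : List ℕ) : σ ∉ SRem S (HB S σ + 1) := by
  rw [← beta_succ hS σ]
  exact beta_not_mem hS σ

lemma HB_lt_alpha (hS : SRem S α = ∅) (σ : List ℕ) : HB S σ < α :=
  lt_of_lt_of_le (HB_lt_beta hS σ) (beta_le hS σ)

lemma beta_mono (hS : SRem S α = ∅) (f : ℕ → ℕ) (n : ℕ) :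
    betaOf S (res f (n+1)) ≤ betaOf S (res f n) := by
  apply csInf_le'
  intro hc
  exact beta_not_mem hS (res f n) (SRem_prefix S _ f n (n+1) (Nat.le_succ n) hc)

lemma HB_mono (hS : SRem S α = ∅) (f : ℕ → ℕ) (n : ℕ) :
    HB S (res f (n+1)) ≤ HB S (res f n) := by
  have h := beta_mono hS f n
  rw [beta_succ hS (res f (n+1)), beta_succ hS (res f n),
    Ordinal.add_one_eq_succ, Ordinal.add_one_eq_succ, Order.succ_le_succ_iff] at h
  exact h
end Bwd

section Bwd2
variable {S : Set (ℕ → ℕ)} {α : Ordinal.{0}}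

lemma res_pref_eq {g f : ℕ → ℕ} {n m : ℕ} (h : res g m = res f m) (hn : n ≤ m) :
    res g n = res f n := by
  rw [← res_take g hn, h, res_take f hn]

lemma GB_congr (hS : SRem S α = ∅) (f : ℕ → ℕ) (n : ℕ)
    (hb : HB S (res f (n+1)) = HB S (res f n)) :
    GB S (res f (n+1)) = GB S (res f n) := by
  set σ := res f n with hσ
  set τ := res f (n+1) with hτ
  have hτl : τ.length = n + 1 := res_length f (n+1)
  have hσl : σ.length = n := res_length f n
  have hpredτ : Ordinal.pred (betaOf S τ) = HB S σ := hb
  have hpredσ : Ordinal.pred (betaOf S σ) = HB S σ := rfl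
  by_cases hC : ∃ g : ℕ → ℕ, res g τ.length = τ ∧ g ∈ seqsIn (SRem S (Ordinal.pred (betaOf S τ)))
  · obtain ⟨g, hgr, hgs⟩ := hC
    rw [hpredτ] at hgs
    have hgσ : res g σ.length = σ := by
      rw [hσl]
      rw [hτl] at hgr
      rw [hσ, hτ] at *
      exact res_pref_eq hgr (Nat.le_succ n)
    have hCσ : ∃ g : ℕ → ℕ, res g σ.length = σ ∧ g ∈ seqsIn (SRem S (Ordinal.pred (betaOf S σ))) :=
      ⟨g, hgσ, hgs⟩
    have hCτ : ∃ g : ℕ → ℕ, res g τ.length = τ ∧ g ∈ seqsIn (SRem S (Ordinal.pred (betaOf S τ))) :=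
      ⟨g, hgr, by rw [hpredτ]; exact hgs⟩
    conv_lhs => rw [GB]
    conv_rhs => rw [GB]
    rw [if_pos hCτ, if_pos hCσ, decide_eq_decide]
    constructor
    · rintro ⟨h, hhr, hhs, hhS⟩
      rw [hpredτ] at hhs
      refine ⟨h, ?_, hhs, hhS⟩
      rw [hσl]
      rw [hτl] at hhr
      exact res_pref_eq hhr (Nat.le_succ n)
    · rintro ⟨h, hhr, hhs, hhS⟩
      rw [hpredσ] at hhs
      by_cases hgS : g ∈ S
      · exact ⟨g, hgr, by rw [hpredτ]; exact hgs, hgS⟩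
      · exfalso
        apply not_mem_HB_succ hS σ
        rw [SRem_succ]
        exact ⟨mem_HB hS σ, h, g, hhs, hgs, hhr, hgσ, hhS, hgS⟩
  · conv_lhs => rw [GB]
    rw [if_neg hC, dif_neg (by
      intro hnil
      rw [hnil] at hτl
      simp at hτl)]
    rw [hτ, res_succ_dropLast]

lemma beta_chain (hS : SRem S α = ∅) (f : ℕ → ℕ) {N n : ℕ} (h : N ≤ n) :
    betaOf S (res f n) ≤ betaOf S (res f N) := by
  induction n with
  | zero => exact le_of_eq (by rw [Nat.le_zero.mp h])
  | succ n ih =>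
    rcases Nat.lt_or_ge N (n+1) with hlt | hge
    · exact le_trans (beta_mono hS f n) (ih (by omega))
    · exact le_of_eq (by rw [(by omega : N = n + 1)])

lemma GB_guesses (hS : SRem S α = ∅) : Guesses (GB S) S := by
  intro f
  have hRne : (Set.range fun n => betaOf S (res f n)).Nonempty := ⟨_, ⟨0, rfl⟩⟩
  obtain ⟨N, hN⟩ := csInf_mem hRne
  have hconst : ∀ n, N ≤ n → betaOf S (res f n) = betaOf S (res f N) := by
    intro n hn
    refine le_antisymm (beta_chain hS f hn) ?_
    have h1 : betaOf S (res f N) = sInf (Set.range fun n => betaOf S (res f n)) := hN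
    rw [h1]
    exact csInf_le' ⟨n, rfl⟩
  set β := HB S (res f N) with hβ
  have hfseq : f ∈ seqsIn (SRem S β) := by
    intro n
    rcases Nat.le_total n N with h | h
    · exact SRem_prefix S β f n N h (mem_HB hS (res f N))
    · have : HB S (res f n) = β := by
        rw [hβ, HB, HB, hconst n h]
      rw [← this]
      exact mem_HB hS (res f n)
  rw [Filter.eventually_atTop]
  refine ⟨N, fun n hn => ?_⟩
  set σ := res f n with hσ
  have hHσ : HB S σ = β := by rw [hβ, HB, HB, hconst n hn]
  have hfr : res f σ.length = σ := by rw [hσ, res_length]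
  have hC : ∃ g : ℕ → ℕ, res g σ.length = σ ∧ g ∈ seqsIn (SRem S (Ordinal.pred (betaOf S σ))) :=
    ⟨f, hfr, by rw [show Ordinal.pred (betaOf S σ) = β from hHσ]; exact hfseq⟩
  rw [GB, if_pos hC, decide_eq_true_eq]
  constructor
  · rintro ⟨g, hgr, hgs, hgS⟩
    rw [show Ordinal.pred (betaOf S σ) = β from hHσ] at hgs
    by_contra hfS
    apply not_mem_HB_succ hS σ
    rw [SRem_succ, hHσ]
    exact ⟨by rw [← hHσ]; exact mem_HB hS σ, g, f, hgs, hfseq, hgr, hfr, hgS, hfS⟩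
  · intro hfS
    exact ⟨f, hfr, by rw [show Ordinal.pred (betaOf S σ) = β from hHσ]; exact hfseq, hfS⟩

end Bwd2


theorem stmt8 (S : Set (ℕ → ℕ)) (α : Ordinal.{0}) :
    GuessableMC S α ↔ SRem S α = ∅ := by
  constructor
  · rintro ⟨G, H, hw⟩
    have hlt := hw.2.1
    have hmain := main_fwd hw
    rw [Set.eq_empty_iff_forall_notMem]
    intro σ hσ
    exact absurd (hlt σ) (not_lt.mpr (hmain α σ hσ))
  · intro hS
    refine ⟨GB S, HB S, GB_guesses hS, fun σ => HB_lt_alpha hS σ, HB_mono hS,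
      fun f n hne => ?_⟩
    rcases lt_or_eq_of_le (HB_mono hS f n) with h | h
    · exact h
    · exact absurd (GB_congr hS f n h) hne
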